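/- Let 𝔞 be a bigraded Lie superalgebra over a field K of characteristic zero, with cohomological degree grading and a compatible positive weight grading. Fix an integer k ≥ 2 and let α be a Maurer–Cartan element whose weight components satisfy α^{(i)} = 0 for all 2 ≤ i ≤ k−1. Suppose b is an element of degree 0 such that α = e^{ad_b} α^{(1)} holds weight-componentwise. Then the weight components of b satisfy [b^{(j)}, α^{(1)}] = 0 for all 1 ≤ j ≤ k−2, and [b^{(k−1)}, α^{(1)}] = α^{(k)}. -/
import Mathlib


/-!
STATEMENT 6.  `A` is a bigraded Lie superalgebra over a field `K` of characteristic zero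
(direct sum of pieces `deg d i` of cohomological degree `d : ℤ` and weight `i ≥ 1`,
bilinear bracket respecting both gradings, graded antisymmetry and graded Jacobi
identity).

Let `α` be a Maurer–Cartan element of degree `1`, given by its weight components
`α : ℕ → A`, whose weight components vanish in weights `2,…,k−1` for some fixed `k ≥ 2`.
Suppose `b` is an element of degree `0` (given by its weight components `b : ℕ → A`)
with `α = e^{ad_b} α⁽¹⁾` weight-componentwise.  Here the family
`c r m` = (weight-`m` component of `ad_b^r (α⁽¹⁾)`) is determined by the recursion
`c 0 m = (if m = 1 then α 1 else 0)` and
`c (r+1) m = Σ_{j=0}^{m} [b⁽ʲ⁾, c r (m−j)]`, and the gauge equation reads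
`α⁽ᵐ⁾ = Σ_{r=0}^{m−1} (1/r!) • c r m` for every `m ≥ 1`.

Then `[b⁽ʲ⁾, α⁽¹⁾] = 0` for all `1 ≤ j ≤ k−2`, and `[b⁽ᵏ⁻¹⁾, α⁽¹⁾] = α⁽ᵏ⁾`.
-/
theorem statement6 (K : Type*) [Field K] [CharZero K]
    (A : Type*) [AddCommGroup A] [Module K A]
    (deg : ℤ → ℕ → Submodule K A)
    (hw0 : ∀ d : ℤ, deg d 0 = ⊥)
    (hdec : DirectSum.IsInternal fun p : ℤ × ℕ => deg p.1 p.2)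
    (br : A →ₗ[K] A →ₗ[K] A)
    (hgr : ∀ (d e : ℤ) (i j : ℕ), ∀ x ∈ deg d i, ∀ y ∈ deg e j,
        br x y ∈ deg (d + e) (i + j))
    (hanti : ∀ (d e : ℤ) (i j : ℕ), ∀ x ∈ deg d i, ∀ y ∈ deg e j,
        br x y = -((-1 : K) ^ (d * e)) • br y x)
    (hjac : ∀ (d e : ℤ) (i j : ℕ), ∀ x ∈ deg d i, ∀ y ∈ deg e j, ∀ z : A,
        br x (br y z) = br (br x y) z + ((-1 : K) ^ (d * e)) • br y (br x z))
    -- `α` is a Maurer–Cartan element of degree 1, given by its weight components: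
    (α : ℕ → A)
    (hα : ∀ i, α i ∈ deg 1 i)
    (hαfin : (Function.support α).Finite)
    (hMC : br (∑ᶠ i, α i) (∑ᶠ i, α i) = 0)
    -- the weight components of `α` vanish in weights `2,…,k−1`:
    (k : ℕ) (hk : 2 ≤ k)
    (hmid : ∀ i, 2 ≤ i → i ≤ k - 1 → α i = 0)
    -- `b` is an element of degree 0, given by its weight components:
    (b : ℕ → A)
    (hb : ∀ j, b j ∈ deg 0 j)
    (hbfin : (Function.support b).Finite)
    -- `c r m` is the weight-`m` component of `ad_b ^ r (α⁽¹⁾)`: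
    (c : ℕ → ℕ → A)
    (hc0 : ∀ m, c 0 m = if m = 1 then α 1 else 0)
    (hcrec : ∀ r m, c (r + 1) m = ∑ j ∈ Finset.range (m + 1), br (b j) (c r (m - j)))
    -- the gauge equation `α = e^{ad_b} α⁽¹⁾`, weight-componentwise:
    (hgauge : ∀ m, 1 ≤ m → α m = ∑ r ∈ Finset.range m, ((r.factorial : K)⁻¹) • c r m) :
    (∀ j, 1 ≤ j → j ≤ k - 2 → br (b j) (α 1) = 0) ∧ br (b (k - 1)) (α 1) = α k := by

  have hb0 : b 0 = 0 := by
    have h := hb 0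
    rw [hw0] at h
    simpa using h
  have L0 : ∀ r, c r 0 = 0 := by
    intro r
    induction r with
    | zero => simp [hc0]
    | succ r ih => simp [hcrec, hb0, ih]
  have L1 : ∀ r, c (r + 1) 1 = 0 := by
    intro r
    rw [hcrec, Finset.sum_range_succ, Finset.sum_range_one]
    simp [hb0, L0]
  have Lc1 : ∀ m, 1 ≤ m → c 1 m = br (b (m - 1)) (α 1) := by
    intro m hm
    rw [hcrec, Finset.sum_eq_single (m - 1)]
    · rw [hc0]
      have h1 : m - (m - 1) = 1 := by omega
      rw [h1]
      simp
    · intro j hj hne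
      rw [hc0]
      have : m - j ≠ 1 := by
        simp only [Finset.mem_range] at hj
        omega
      simp [this]
    · intro h
      exfalso
      apply h
      simp only [Finset.mem_range]
      omega
  have main : ∀ m, 2 ≤ m → m ≤ k - 1 → ∀ r, c (r + 1) m = 0 := by
    intro m
    induction m using Nat.strong_induction_on with
    | _ m IH =>
      intro hm2 hmk
      have stepA : ∀ r, 1 ≤ r → c (r + 1) m = 0 := by
        intro r hr
        rw [hcrec]
        apply Finset.sum_eq_zero
        intro j hj
        simp only [Finset.mem_range] at hj
        rcases Nat.eq_zero_or_pos j with h0 | h1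
        · simp [h0, hb0]
        · have hz : c r (m - j) = 0 := by
            obtain ⟨r', rfl⟩ : ∃ r', r = r' + 1 := ⟨r - 1, by omega⟩
            rcases Nat.lt_or_ge (m - j) 2 with h | h
            · have : m - j = 0 ∨ m - j = 1 := by omega
              rcases this with h | h <;> rw [h]
              · exact L0 _
              · exact L1 _
            · exact IH (m - j) (by omega) h (by omega) r'
          rw [hz]
          simp
      have h1 : c 1 m = 0 := by
        have hsum := hgauge m (by omega)
        rw [hmid m hm2 hmk] at hsum
        have heq : ∑ r ∈ Finset.range m, ((r.factorial : K)⁻¹) • c r m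
            = ((Nat.factorial 1 : K)⁻¹) • c 1 m := by
          apply Finset.sum_eq_single_of_mem
          · simp only [Finset.mem_range]; omega
          · intro r hr hne
            rcases Nat.eq_zero_or_pos r with h0 | hrp
            · subst h0
              rw [hc0]
              have : m ≠ 1 := by omega
              simp [this]
            · obtain ⟨r', rfl⟩ : ∃ r', r = r' + 1 := ⟨r - 1, by omega⟩
              rw [stepA r' (by omega), smul_zero]
        rw [heq] at hsum
        simpa using hsum.symm
      intro r
      rcases Nat.eq_zero_or_pos r with h0 | hrp
      · subst h0; exact h1
      · exact stepA r hrp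
  have stepAk : ∀ r, 1 ≤ r → c (r + 1) k = 0 := by
    intro r hr
    rw [hcrec]
    apply Finset.sum_eq_zero
    intro j hj
    simp only [Finset.mem_range] at hj
    rcases Nat.eq_zero_or_pos j with h0 | h1
    · simp [h0, hb0]
    · have hz : c r (k - j) = 0 := by
        obtain ⟨r', rfl⟩ : ∃ r', r = r' + 1 := ⟨r - 1, by omega⟩
        rcases Nat.lt_or_ge (k - j) 2 with h | h
        · have : k - j = 0 ∨ k - j = 1 := by omega
          rcases this with h | h <;> rw [h]
          · exact L0 _
          · exact L1 _
        · exact main (k - j) h (by omega) r'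
      rw [hz]
      simp
  constructor
  · intro j hj1 hj2
    have h := main (j + 1) (by omega) (by omega) 0
    rw [Lc1 (j + 1) (by omega)] at h
    simpa using h
  · have hsum := hgauge k (by omega)
    have heq : ∑ r ∈ Finset.range k, ((r.factorial : K)⁻¹) • c r k
        = ((Nat.factorial 1 : K)⁻¹) • c 1 k := by
      apply Finset.sum_eq_single_of_mem
      · simp only [Finset.mem_range]; omega
      · intro r hr hne
        rcases Nat.eq_zero_or_pos r with h0 | hrp
        · subst h0
          rw [hc0]
          have : k ≠ 1 := by omega
          simp [this]
        · obtain ⟨r', rfl⟩ : ∃ r', r = r' + 1 := ⟨r - 1, by omega⟩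
          rw [stepAk r' (by omega), smul_zero]
    rw [heq, Lc1 k (by omega)] at hsum
    simpa using hsum.symm
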